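/- arXiv:math/0605717 — 3 statements merged into one kernel-verified Lean document; each statement's English description precedes it below -/
import Mathlib

section
/- If Γ is a connected finite simple graph on n vertices, then its index r (the largest adjacency eigenvalue) satisfies r ≥ 2 cos(π/(n+1)). -/
open Matrix Real

/-- `μ` is an eigenvalue of the real matrix `A`. -/
def IsEigen {n : Type*} [Fintype n] (A : Matrix n n ℝ) (μ : ℝ) : Prop :=
  ∃ v : n → ℝ, v ≠ 0 ∧ A.mulVec v = μ • v

lemma rayleigh_le {N : ℕ} (A : Matrix (Fin N) (Fin N) ℝ) (hA : A.IsHermitian) (r : ℝ)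
    (hub : ∀ μ, IsEigen A μ → μ ≤ r) (x : Fin N → ℝ) :
    x ⬝ᵥ A.mulVec x ≤ r * (x ⬝ᵥ x) := by
  classical
  set b := hA.eigenvectorBasis with hb
  have heig : ∀ j, A.mulVec (fun i => b j i) = hA.eigenvalues j • (fun i => b j i) :=
    fun j => hA.mulVec_eigenvectorBasis j
  have hle : ∀ j, hA.eigenvalues j ≤ r := by
    intro j
    refine hub _ ⟨fun i => b j i, ?_, heig j⟩
    intro h0
    have : b j = 0 := by
      ext i; exact congrFun h0 i
    simpa [this] using b.orthonormal.1 j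
  -- inner products
  have hinner : ∀ (u v : EuclideanSpace ℝ (Fin N)), (inner ℝ u v : ℝ) = ∑ i, u i * v i := by
    intro u v
    rw [PiLp.inner_apply]
    simp [RCLike.inner_apply, starRingEnd_apply]
    exact Finset.sum_congr rfl fun i _ => mul_comm _ _
  set ξ : EuclideanSpace ℝ (Fin N) := WithLp.toLp 2 x with hξ
  set η : EuclideanSpace ℝ (Fin N) := WithLp.toLp 2 (A.mulVec x) with hη
  have key : ∀ v : EuclideanSpace ℝ (Fin N), (inner ℝ ξ v : ℝ) = ∑ j, (inner ℝ ξ (b j) : ℝ) * (inner ℝ (b j) v : ℝ) :=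
    fun v => (b.sum_inner_mul_inner ξ v).symm
  have hbx : ∀ j, (inner ℝ (b j) ξ : ℝ) = (fun i => b j i) ⬝ᵥ x := by
    intro j; rw [hinner]; rfl
  have hxb : ∀ j, (inner ℝ ξ (b j) : ℝ) = (fun i => b j i) ⬝ᵥ x := by
    intro j; rw [hinner, dotProduct]; simp [mul_comm]
    rfl
  have hbη : ∀ j, (inner ℝ (b j) η : ℝ) = hA.eigenvalues j * ((fun i => b j i) ⬝ᵥ x) := by
    intro j
    rw [hinner]
    have : (fun i => b j i) ⬝ᵥ (A.mulVec x) = (A.mulVec (fun i => b j i)) ⬝ᵥ x := by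
      rw [dotProduct_mulVec, ← mulVec_transpose]
      congr 1
      rw [← Matrix.conjTranspose_eq_transpose_of_trivial]
      rw [hA]
    calc ∑ i, b j i * (A.mulVec x) i = (fun i => b j i) ⬝ᵥ (A.mulVec x) := rfl
      _ = (A.mulVec (fun i => b j i)) ⬝ᵥ x := this
      _ = (hA.eigenvalues j • (fun i => b j i)) ⬝ᵥ x := by rw [heig j]
      _ = hA.eigenvalues j * ((fun i => b j i) ⬝ᵥ x) := by rw [smul_dotProduct]; rfl
  have h1 : x ⬝ᵥ A.mulVec x = ∑ j, hA.eigenvalues j * ((fun i => b j i) ⬝ᵥ x)^2 := by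
    have : x ⬝ᵥ A.mulVec x = (inner ℝ ξ η : ℝ) := by rw [hinner]; rfl
    rw [this, key η]
    refine Finset.sum_congr rfl fun j _ => ?_
    rw [hxb, hbη]; ring
  have h2 : x ⬝ᵥ x = ∑ j, ((fun i => b j i) ⬝ᵥ x)^2 := by
    have : x ⬝ᵥ x = (inner ℝ ξ ξ : ℝ) := by rw [hinner]; rfl
    rw [this, key ξ]
    refine Finset.sum_congr rfl fun j _ => ?_
    rw [hxb, hbx]; ring
  rw [h1, h2, Finset.mul_sum]
  refine Finset.sum_le_sum fun j _ => ?_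
  exact mul_le_mul_of_nonneg_right (hle j) (sq_nonneg _)


lemma trig_id (x y t : ℝ) :
    sin x * sin (y+t) * sin (x+y+t) + sin y * sin (x+t) * sin (x+y+t)
      - sin (x+y) * sin (x+t) * sin (y+t) = sin x * sin y * sin (x+y+2*t) := by
  simp only [sin_add, cos_add, two_mul]
  ring_nf

lemma trig_rec (k t : ℝ) : sin (k*t + 2*t) + sin (k*t) = 2 * cos t * sin (k*t + t) := by
  simp only [sin_add, cos_add, sin_two_mul, cos_two_mul]
  nlinarith [sin_sq_add_cos_sq t, sin_sq_add_cos_sq (k*t)]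

noncomputable def SS (n k : ℕ) : ℝ := Real.sin (k * (π / (n+1)))

lemma pi_eq (n : ℕ) : ((n:ℝ)+1) * (π/(n+1)) = π := by
  field_simp

lemma SS_pos {n k : ℕ} (h1 : 1 ≤ k) (h2 : k ≤ n) : 0 < SS n k := by
  apply sin_pos_of_pos_of_lt_pi
  · have hk : (1:ℝ) ≤ (k:ℝ) := by exact_mod_cast h1
    have : (0:ℝ) < π / (n+1) := by positivity
    nlinarith
  · have hlt : (k:ℝ) < (n:ℝ)+1 := by
      have : (k:ℝ) ≤ (n:ℝ) := by exact_mod_cast h2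
      linarith
    calc (k:ℝ) * (π/(n+1)) < ((n:ℝ)+1) * (π/(n+1)) :=
          mul_lt_mul_of_pos_right hlt (by positivity)
      _ = π := pi_eq n

lemma SS_nonneg {n k : ℕ} (h2 : k ≤ n + 1) : 0 ≤ SS n k := by
  apply sin_nonneg_of_nonneg_of_le_pi
  · positivity
  · have hle : (k:ℝ) ≤ (n:ℝ)+1 := by exact_mod_cast h2
    calc (k:ℝ) * (π/(n+1)) ≤ ((n:ℝ)+1) * (π/(n+1)) :=
          mul_le_mul_of_nonneg_right hle (by positivity)
      _ = π := pi_eq n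

lemma SS_rec (n k : ℕ) : SS n (k+2) + SS n k = 2 * cos (π/(n+1)) * SS n (k+1) := by
  have h := trig_rec (k:ℝ) (π/(n+1))
  unfold SS
  push_cast
  convert h using 3 <;> ring

lemma SS_sym {n k : ℕ} (h : k ≤ n + 1) : SS n (n + 1 - k) = SS n k := by
  unfold SS
  have h1 : ((n + 1 - k : ℕ) : ℝ) = (n+1) - k := by
    push_cast [h]; ring
  rw [h1]
  have h2 : ((n:ℝ) + 1 - k) * (π/(n+1)) = π - k * (π/(n+1)) := by
    rw [sub_mul, pi_eq]
  rw [h2, sin_pi_sub]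

lemma SS_zero (n : ℕ) : SS n 0 = 0 := by simp [SS]

/-- key superadditivity -/
lemma superadd2 {n a b : ℕ} (ha : 1 ≤ a) (hb : 1 ≤ b) (hab : a + b + 1 ≤ n) :
    SS n (a+b) / SS n (a+b+1) ≤ SS n a / SS n (a+1) + SS n b / SS n (b+1) := by
  have pa := SS_pos (n:=n) ha (by omega : a ≤ n)
  have pa1 := SS_pos (by omega) (by omega : a+1 ≤ n)
  have pb := SS_pos (n:=n) hb (by omega : b ≤ n)
  have pb1 := SS_pos (by omega) (by omega : b+1 ≤ n)
  have pab := SS_pos (by omega) (by omega : a+b ≤ n)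
  have pab1 := SS_pos (by omega) (hab)
  have pab2 := SS_nonneg (by omega : a+b+2 ≤ n+1)
  have key : SS n a * SS n (b+1) * SS n (a+b+1) + SS n b * SS n (a+1) * SS n (a+b+1)
      - SS n (a+b) * SS n (a+1) * SS n (b+1) = SS n a * SS n b * SS n (a+b+2) := by
    have h := trig_id ((a:ℝ) * (π/(n+1))) ((b:ℝ) * (π/(n+1))) (π/(n+1))
    unfold SS
    push_cast
    convert h using 2 <;> (try (congr 1 <;> ring)) <;> (try ring)
  rw [div_add_div _ _ (ne_of_gt pa1) (ne_of_gt pb1), div_le_div_iff₀ pab1 (by positivity)]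
  nlinarith [key, mul_nonneg (mul_nonneg pa.le pb.le) pab2]

lemma superaddF {n : ℕ} {ι : Type*} [DecidableEq ι] (F : Finset ι) (f : ι → ℕ) (hne : F.Nonempty)
    (h1 : ∀ i ∈ F, 1 ≤ f i) (hsum : (∑ i ∈ F, f i) + 1 ≤ n) :
    SS n (∑ i ∈ F, f i) / SS n ((∑ i ∈ F, f i)+1) ≤ ∑ i ∈ F, SS n (f i) / SS n (f i + 1) := by
  induction hne using Finset.Nonempty.cons_induction with
  | singleton i => simp
  | cons a F ha hne IH =>
    rw [Finset.sum_cons] at hsum ⊢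
    rw [Finset.sum_cons]
    have hfa : 1 ≤ f a := h1 a (Finset.mem_cons_self a F)
    have hFs : 1 ≤ ∑ i ∈ F, f i := by
      obtain ⟨j, hj⟩ := hne
      calc 1 ≤ f j := h1 j (Finset.mem_cons_of_mem hj)
        _ ≤ ∑ i ∈ F, f i := Finset.single_le_sum (fun i _ => Nat.zero_le _) hj
    have h2 := superadd2 (n := n) hfa hFs (by omega)
    have IH' := IH (fun i hi => h1 i (Finset.mem_cons_of_mem hi)) (by omega)
    calc SS n (f a + ∑ i ∈ F, f i) / SS n (f a + ∑ i ∈ F, f i + 1)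
        ≤ SS n (f a) / SS n (f a + 1) + SS n (∑ i ∈ F, f i) / SS n ((∑ i ∈ F, f i) + 1) := h2
      _ ≤ SS n (f a) / SS n (f a + 1) + ∑ i ∈ F, SS n (f i) / SS n (f i + 1) := by linarith

lemma exists_good_vec {n : ℕ} (G : SimpleGraph (Fin n)) [DecidableRel G.Adj]
    (hconn : G.Connected) (hn : 2 ≤ n) :
    ∃ x : Fin n → ℝ, (∀ v, 0 < x v) ∧
      ∀ v, 2 * Real.cos (π/(n+1)) * x v ≤ ((G.adjMatrix ℝ).mulVec x) v := by
  classical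
  set c : ℝ := 2 * Real.cos (π/(n+1)) with hc
  obtain ⟨r0⟩ : Nonempty (Fin n) := hconn.nonempty
  set d : Fin n → ℕ := fun v => G.dist r0 v with hd
  -- parent function
  have hpar : ∀ v : Fin n, v ≠ r0 → ∃ u, G.Adj v u ∧ d u + 1 = d v := by
    intro v hv
    obtain ⟨p, hp⟩ := (hconn.preconnected r0 v).exists_walk_length_eq_dist
    have hdpos : 0 < d v := by
      show 0 < G.dist r0 v
      exact hconn.pos_dist_of_ne (Ne.symm hv)
    have hqlen : (p.reverse).length = d v := by
      show (p.reverse).length = G.dist r0 v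
      rw [SimpleGraph.Walk.length_reverse, hp]
    generalize hq : p.reverse = q at hqlen
    cases q with
    | nil => exact absurd rfl hv
    | @cons _ u _ hadj q' =>
      refine ⟨u, hadj, ?_⟩
      have h1 : d u ≤ q'.length := by
        show G.dist r0 u ≤ q'.length
        rw [SimpleGraph.dist_comm]
        exact SimpleGraph.dist_le q'
      have h2 : d v ≤ d u + 1 := by
        show G.dist r0 v ≤ G.dist r0 u + 1
        have htri := hconn.dist_triangle (u := r0) (v := u) (w := v)
        have huv : G.dist u v ≤ 1 := SimpleGraph.dist_le (hadj.symm.toWalk)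
        omega
      have h3 : q'.length + 1 = d v := by
        simp only [SimpleGraph.Walk.length_cons] at hqlen
        exact hqlen
      omega
  set P : Fin n → Fin n := fun v => if h : v = r0 then r0 else Classical.choose (hpar v h) with hP
  have hProot : P r0 = r0 := by simp [hP]
  have hPadj : ∀ v, v ≠ r0 → G.Adj v (P v) := by
    intro v hv
    simp only [hP, dif_neg hv]
    exact (Classical.choose_spec (hpar v hv)).1
  have hPd : ∀ v, v ≠ r0 → d (P v) + 1 = d v := by
    intro v hv
    simp only [hP, dif_neg hv]
    exact (Classical.choose_spec (hpar v hv)).2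
  have hd0 : ∀ v, d v = 0 ↔ v = r0 := by
    intro v
    show G.dist r0 v = 0 ↔ v = r0
    constructor
    · intro h; exact ((hconn.dist_eq_zero_iff).1 h).symm
    · intro h; subst h; exact SimpleGraph.dist_self
  -- d after iterates
  have hdit : ∀ k (v : Fin n), k ≤ d v → d (P^[k] v) + k = d v := by
    intro k
    induction k with
    | zero => intro v _; simp
    | succ k IH =>
      intro v hk
      have hv : v ≠ r0 := by
        intro h; rw [h, (hd0 r0).2 rfl] at hk; omega
      rw [Function.iterate_succ_apply]
      have h1 := hPd v hv
      have := IH (P v) (by omega)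
      omega
  have hreach : ∀ v, P^[d v] v = r0 := by
    intro v
    have := hdit (d v) v le_rfl
    have h0 : d (P^[d v] v) = 0 := by omega
    exact (hd0 _).1 h0
  have hne_iter : ∀ (v : Fin n) k, k < d v → P^[k] v ≠ r0 := by
    intro v k hk h
    have := hdit k v (le_of_lt hk)
    rw [h, (hd0 r0).2 rfl] at this
    omega
  -- descendants
  set DD : Fin n → Finset (Fin n) := fun u => Finset.univ.filter (fun w => ∃ k, P^[k] w = u) with hDD
  set m : Fin n → ℕ := fun u => (DD u).card with hm
  have hmem : ∀ u w, w ∈ DD u ↔ ∃ k, P^[k] w = u := by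
    intro u w; simp [hDD]
  have hself : ∀ u, u ∈ DD u := fun u => (hmem u u).2 ⟨0, rfl⟩
  have hm1 : ∀ u, 1 ≤ m u := fun u => Finset.card_pos.2 ⟨u, hself u⟩
  -- children
  set C : Fin n → Finset (Fin n) := fun v => Finset.univ.filter (fun u => P u = v ∧ u ≠ r0) with hC
  have hCmem : ∀ v u, u ∈ C v ↔ P u = v ∧ u ≠ r0 := by intro v u; simp [hC]
  -- d of iterates decreases (weak, all k)
  have hdle : ∀ k (v : Fin n), d (P^[k] v) ≤ d v := by
    intro k v
    by_cases hk : k ≤ d v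
    · have := hdit k v hk; omega
    · push_neg at hk
      have : P^[k] v = r0 := by
        have h1 : P^[k] v = P^[k - d v] (P^[d v] v) := by
          rw [← Function.iterate_add_apply]
          congr 1; omega
        rw [h1, hreach v]
        clear h1
        generalize (k - d v) = j
        induction j with
        | zero => rfl
        | succ j IHj => rw [Function.iterate_succ_apply, hProot]; exact IHj
      rw [this, (hd0 r0).2 rfl]; omega
  -- children have d one more
  have hdchild : ∀ v u, u ∈ C v → d u = d v + 1 := by
    intro v u hu
    rw [hCmem] at hu
    have := hPd u hu.2
    rw [hu.1] at this
    omega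
  -- v not in DD u for child u
  have hnotin : ∀ v u, u ∈ C v → v ∉ DD u := by
    intro v u hu hv
    obtain ⟨k, hk⟩ := (hmem u v).1 hv
    have hdu := hdchild v u hu
    cases k with
    | zero => simp at hk; subst hk; omega
    | succ k =>
      have : d (P^[k+1] v) ≤ d v := hdle (k+1) v
      rw [hk] at this
      omega
  -- DD u ⊆ DD v for child
  have hsub : ∀ v u, u ∈ C v → DD u ⊆ DD v := by
    intro v u hu w hw
    obtain ⟨k, hk⟩ := (hmem u w).1 hw
    refine (hmem v w).2 ⟨k+1, ?_⟩
    rw [Function.iterate_succ_apply', hk, ((hCmem v u).1 hu).1]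
  -- disjointness
  have hdisj : ∀ v, ∀ u1 ∈ C v, ∀ u2 ∈ C v, u1 ≠ u2 → Disjoint (DD u1) (DD u2) := by
    intro v u1 hu1 u2 hu2 hne
    rw [Finset.disjoint_left]
    intro w hw1 hw2
    obtain ⟨k1, hk1⟩ := (hmem u1 w).1 hw1
    obtain ⟨k2, hk2⟩ := (hmem u2 w).1 hw2
    rcases le_total k1 k2 with h | h
    · have hPe : P^[k2 - k1] u1 = u2 := by
        rw [← hk1, ← Function.iterate_add_apply]
        rw [show k2 - k1 + k1 = k2 by omega, hk2]
      rcases Nat.eq_zero_or_pos (k2 - k1) with h0 | h0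
      · rw [h0] at hPe; exact hne hPe
      · have hj : P^[k2-k1] u1 = P^[k2-k1-1] (P u1) := by
          rw [← Function.iterate_succ_apply]
          congr 1; omega
        rw [hj, ((hCmem v u1).1 hu1).1] at hPe
        have hd2 := hdchild v u2 hu2
        have hle := hdle (k2-k1-1) v
        rw [hPe] at hle
        omega
    · have hPe : P^[k1 - k2] u2 = u1 := by
        rw [← hk2, ← Function.iterate_add_apply]
        rw [show k1 - k2 + k2 = k1 by omega, hk1]
      rcases Nat.eq_zero_or_pos (k1 - k2) with h0 | h0
      · rw [h0] at hPe; exact hne hPe.symm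
      · have hj : P^[k1-k2] u2 = P^[k1-k2-1] (P u2) := by
          rw [← Function.iterate_succ_apply]
          congr 1; omega
        rw [hj, ((hCmem v u2).1 hu2).1] at hPe
        have hd1 := hdchild v u1 hu1
        have hle := hdle (k1-k2-1) v
        rw [hPe] at hle
        omega
  -- partition: DD v = insert v (biUnion C v DD)
  have hpartition : ∀ v, DD v = insert v ((C v).biUnion DD) := by
    intro v
    apply Finset.Subset.antisymm
    · intro w hw
      by_cases hwv : w = v
      · subst hwv; exact Finset.mem_insert_self _ _
      · obtain ⟨k, hk⟩ := (hmem v w).1 hw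
        have hex : ∃ k, P^[k] w = v := ⟨k, hk⟩
        set k0 := Nat.find hex with hk0
        have hk0spec : P^[k0] w = v := Nat.find_spec hex
        have hk0pos : 0 < k0 := by
          rcases Nat.eq_zero_or_pos k0 with h0 | h0
          · rw [h0] at hk0spec; simp at hk0spec; exact absurd hk0spec hwv
          · exact h0
        set u := P^[k0 - 1] w with hu
        have hPu : P u = v := by
          have h5 : P (P^[k0-1] w) = P^[k0-1+1] w := (Function.iterate_succ_apply' P (k0-1) w).symm
          rw [hu, h5, show k0-1+1 = k0 by omega, hk0spec]
        have hur0 : u ≠ r0 := by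
          intro h
          apply Nat.find_min hex (show k0 - 1 < k0 by omega)
          have hv0 : v = r0 := by rw [← hPu, h, hProot]
          rw [← hu, h, hv0]
        refine Finset.mem_insert_of_mem (Finset.mem_biUnion.2 ⟨u, ?_, ?_⟩)
        · exact (hCmem v u).2 ⟨hPu, hur0⟩
        · exact (hmem u w).2 ⟨k0 - 1, rfl⟩
    · intro w hw
      rcases Finset.mem_insert.1 hw with h | h
      · subst h; exact hself w
      · obtain ⟨u, hu, hwu⟩ := Finset.mem_biUnion.1 h
        exact hsub v u hu hwu
  -- card equation
  have hcard : ∀ v, m v = 1 + ∑ u ∈ C v, m u := by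
    intro v
    have hvnot : v ∉ (C v).biUnion DD := by
      intro hvin
      obtain ⟨u, hu, hvu⟩ := Finset.mem_biUnion.1 hvin
      exact hnotin v u hu hvu
    show (DD v).card = 1 + ∑ u ∈ C v, (DD u).card
    rw [hpartition v, Finset.card_insert_of_notMem hvnot,
        Finset.card_biUnion (fun u1 h1 u2 h2 hne => hdisj v u1 h1 u2 h2 hne)]
    omega
  -- iterates of r0 stay r0
  have hr0iter : ∀ k, P^[k] r0 = r0 := by
    intro k
    induction k with
    | zero => rfl
    | succ k IHk => rw [Function.iterate_succ_apply', IHk, hProot]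
  -- m bounds
  have hmn : ∀ v, v ≠ r0 → m v + 1 ≤ n := by
    intro v hv
    have hsub' : DD v ⊆ Finset.univ.erase r0 := by
      intro w hw
      refine Finset.mem_erase.2 ⟨?_, Finset.mem_univ w⟩
      intro h
      obtain ⟨k, hk⟩ := (hmem v w).1 hw
      rw [h, hr0iter k] at hk
      exact hv hk.symm
    have h1 : m v ≤ (Finset.univ.erase r0).card := Finset.card_le_card hsub'
    rw [Finset.card_erase_of_mem (Finset.mem_univ r0)] at h1
    simp only [Finset.card_univ, Fintype.card_fin] at h1
    omega
  have hmr0 : m r0 = n := by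
    have : DD r0 = Finset.univ := by
      apply Finset.eq_univ_of_forall
      intro w
      exact (hmem r0 w).2 ⟨d w, hreach w⟩
    rw [hm]
    simp only [this, Finset.card_univ, Fintype.card_fin]
  -- the test vector
  set hval : ℕ → ℝ := fun j => SS n j / SS n (j+1) with hhval
  set x : Fin n → ℝ := fun v => ∏ k ∈ Finset.range (d v), hval (m (P^[k] v)) with hx
  have hval_pos : ∀ u : Fin n, u ≠ r0 → 0 < hval (m u) := by
    intro u hu
    have h1 := hm1 u
    have h2 := hmn u hu
    exact div_pos (SS_pos h1 (by omega)) (SS_pos (by omega) (by omega))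
  have hx_pos : ∀ v, 0 < x v := by
    intro v
    rw [hx]
    apply Finset.prod_pos
    intro k hk
    rw [Finset.mem_range] at hk
    exact hval_pos _ (hne_iter v k hk)
  have hx_r0 : x r0 = 1 := by
    rw [hx]
    simp only
    rw [(hd0 r0).2 rfl]
    simp
  have hx_rec : ∀ v, v ≠ r0 → x v = hval (m v) * x (P v) := by
    intro v hv
    have hdv : d v = d (P v) + 1 := (hPd v hv).symm
    rw [hx]
    simp only
    rw [hdv, Finset.prod_range_succ']
    simp only [Function.iterate_zero_apply, Function.iterate_succ_apply]
    rw [mul_comm]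
  have hchild : ∀ v u, u ∈ C v → x u = hval (m u) * x v := by
    intro v u hu
    rw [hx_rec u ((hCmem v u).1 hu).2, ((hCmem v u).1 hu).1]
  -- children sums
  have hsumC : ∀ v, ∑ u ∈ C v, x u = (∑ u ∈ C v, hval (m u)) * x v := by
    intro v
    rw [Finset.sum_mul]
    exact Finset.sum_congr rfl (fun u hu => hchild v u hu)
  -- c * SS bound basics
  have hS1 : 0 < SS n 1 := SS_pos le_rfl (by omega)
  have hc_eq : SS n 2 = c * SS n 1 := by
    have := SS_rec n 0
    rw [SS_zero] at this
    rw [hc]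
    linarith
  -- main per-vertex bound
  refine ⟨x, hx_pos, ?_⟩
  intro v
  rw [SimpleGraph.adjMatrix_mulVec_apply]
  by_cases hv : v = r0
  · rw [hv]
    have hCsub : C r0 ⊆ G.neighborFinset r0 := by
      intro u hu
      rw [SimpleGraph.mem_neighborFinset]
      have := hPadj u ((hCmem r0 u).1 hu).2
      rw [((hCmem r0 u).1 hu).1] at this
      exact this.symm
    have hge : ∑ u ∈ C r0, x u ≤ ∑ u ∈ G.neighborFinset r0, x u := by
      apply Finset.sum_le_sum_of_subset_of_nonneg hCsub
      intro u _ _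
      exact (hx_pos u).le
    have hsumM : ∑ u ∈ C r0, m u = n - 1 := by
      have := hcard r0
      rw [hmr0] at this
      omega
    have hCne : (C r0).Nonempty := by
      rw [Finset.nonempty_iff_ne_empty]
      intro h
      rw [h, Finset.sum_empty] at hsumM
      omega
    have hsa := superaddF (n := n) (C r0) m hCne (fun u _ => hm1 u) (by omega)
    rw [hsumM] at hsa
    have hlast : SS n (n-1) / SS n (n-1+1) = c := by
      have e1 : SS n (n-1) = SS n 2 := by
        rw [show n - 1 = n + 1 - 2 by omega]
        exact SS_sym (by omega)
      have e2 : SS n (n-1+1) = SS n 1 := by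
        rw [show n - 1 + 1 = n + 1 - 1 by omega]
        exact SS_sym (by omega)
      rw [e1, e2, hc_eq]
      field_simp
    rw [hlast] at hsa
    have : c * x r0 ≤ ∑ u ∈ C r0, x u := by
      rw [hx_r0, mul_one, hsumC r0, hx_r0, mul_one]
      exact hsa
    linarith
  · -- v ≠ r0
    have hPvnot : P v ∉ C v := by
      intro h
      have h1 := hPd v hv
      have h2 := hdchild v (P v) h
      omega
    have hSsub : insert (P v) (C v) ⊆ G.neighborFinset v := by
      intro u hu
      rcases Finset.mem_insert.1 hu with h | h
      · subst h
        rw [SimpleGraph.mem_neighborFinset]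
        exact (hPadj v hv).symm.symm
      · rw [SimpleGraph.mem_neighborFinset]
        have := hPadj u ((hCmem v u).1 h).2
        rw [((hCmem v u).1 h).1] at this
        exact this.symm
    have hge : ∑ u ∈ insert (P v) (C v), x u ≤ ∑ u ∈ G.neighborFinset v, x u := by
      apply Finset.sum_le_sum_of_subset_of_nonneg hSsub
      intro u _ _
      exact (hx_pos u).le
    rw [Finset.sum_insert hPvnot] at hge
    set μ := m v with hμ
    have hμ1 : 1 ≤ μ := hm1 v
    have hμn : μ + 1 ≤ n := hmn v hv
    have hSμ : 0 < SS n μ := SS_pos hμ1 (by omega)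
    have hSμ1 : 0 < SS n (μ+1) := SS_pos (by omega) (by omega)
    have hxPv : x (P v) = x v * (SS n (μ+1) / SS n μ) := by
      have := hx_rec v hv
      rw [hhval] at this
      simp only at this
      rw [this]
      rw [← hμ]
      field_simp
    have hrec : SS n (μ+1) + SS n (μ-1) = c * SS n μ := by
      have := SS_rec n (μ-1)
      rw [show μ - 1 + 2 = μ + 1 by omega, show μ - 1 + 1 = μ by omega] at this
      rw [hc]
      linarith [this]
    have hsumM : ∑ u ∈ C v, m u = μ - 1 := by
      have := hcard v
      omega
    have hkey : c ≤ SS n (μ+1)/SS n μ + ∑ u ∈ C v, hval (m u) := by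
      rcases Finset.eq_empty_or_nonempty (C v) with hE | hNE
      · have hμeq : μ = 1 := by
          have := hcard v
          rw [hE, Finset.sum_empty] at this
          omega
        rw [hE, Finset.sum_empty, add_zero, hμeq]
        have h2 : SS n (1+1) = c * SS n 1 := hc_eq
        rw [h2, mul_div_assoc, div_self (ne_of_gt hS1), mul_one]
      · have hsa := superaddF (n := n) (C v) m hNE (fun u _ => hm1 u) (by omega)
        rw [hsumM] at hsa
        rw [show μ - 1 + 1 = μ by omega] at hsa
        have : c = SS n (μ+1)/SS n μ + SS n (μ-1)/SS n μ := by
          rw [← add_div, hrec, mul_div_assoc, div_self (ne_of_gt hSμ), mul_one]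
        rw [this]
        have : ∑ u ∈ C v, SS n (m u) / SS n (m u + 1) = ∑ u ∈ C v, hval (m u) := by
          apply Finset.sum_congr rfl
          intro u _
          rw [hhval]
        linarith [hsa, this]
    -- combine
    have hfinal : c * x v ≤ x (P v) + ∑ u ∈ C v, x u := by
      rw [hxPv, hsumC v]
      have hxv := hx_pos v
      calc c * x v ≤ (SS n (μ+1)/SS n μ + ∑ u ∈ C v, hval (m u)) * x v := by
            apply mul_le_mul_of_nonneg_right hkey hxv.le
        _ = x v * (SS n (μ+1) / SS n μ) + (∑ u ∈ C v, hval (m u)) * x v := by ring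
    linarith


/-- A connected finite simple graph on n vertices has index
r ≥ 2cos(π/(n+1)). -/
theorem stmt5 {n : ℕ} (G : SimpleGraph (Fin n)) [DecidableRel G.Adj]
    (hconn : G.Connected)
    (r : ℝ)
    (hr : IsEigen (G.adjMatrix ℝ) r ∧ ∀ μ, IsEigen (G.adjMatrix ℝ) μ → μ ≤ r) :
    2 * Real.cos (Real.pi / (n + 1)) ≤ r := by
  classical
  have hA : (G.adjMatrix ℝ).IsHermitian := by
    rw [Matrix.IsHermitian, Matrix.conjTranspose_eq_transpose_of_trivial]
    exact G.isSymm_adjMatrix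
  have hray := rayleigh_le (G.adjMatrix ℝ) hA r hr.2
  obtain ⟨v0⟩ : Nonempty (Fin n) := hconn.nonempty
  have hn1 : 1 ≤ n := by
    by_contra h
    push_neg at h
    interval_cases n
    exact absurd v0.2 (by omega)
  by_cases hn : n = 1
  · subst hn
    have hc0 : 2 * Real.cos (Real.pi / ((1:ℕ) + 1)) = 0 := by
      norm_num [Real.cos_pi_div_two]
    rw [hc0]
    -- r ≥ 0 via constant vector
    set x : Fin 1 → ℝ := fun _ => 1 with hx
    have h1 := rayleigh_le (G.adjMatrix ℝ) hA r hr.2 x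
    have h2 : (0:ℝ) ≤ x ⬝ᵥ (G.adjMatrix ℝ).mulVec x := by
      apply Finset.sum_nonneg
      intro v _
      rw [SimpleGraph.adjMatrix_mulVec_apply]
      have : (0:ℝ) ≤ ∑ u ∈ G.neighborFinset v, x u := by
        apply Finset.sum_nonneg; intro u _; rw [hx]; norm_num
      simpa [hx] using this
    have h3 : x ⬝ᵥ x = 1 := by simp [hx, dotProduct]
    rw [h3, mul_one] at h1
    linarith
  · have hn2 : 2 ≤ n := by omega
    obtain ⟨x, hxpos, hxineq⟩ := exists_good_vec G hconn hn2
    have hlow : (2 * Real.cos (Real.pi / (n + 1))) * (x ⬝ᵥ x) ≤ x ⬝ᵥ (G.adjMatrix ℝ).mulVec x := by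
      rw [dotProduct, dotProduct, Finset.mul_sum]
      apply Finset.sum_le_sum
      intro v _
      have h1 := hxineq v
      have h2 := (hxpos v).le
      calc 2 * Real.cos (Real.pi / (n + 1)) * (x v * x v)
          = x v * (2 * Real.cos (Real.pi / (n + 1)) * x v) := by ring
        _ ≤ x v * ((G.adjMatrix ℝ).mulVec x v) := by
            apply mul_le_mul_of_nonneg_left h1 h2
    have hup := hray x
    have hxx : 0 < x ⬝ᵥ x := by
      rw [dotProduct]
      apply Finset.sum_pos
      · intro v _; exact mul_pos (hxpos v) (hxpos v)
      · exact ⟨v0, Finset.mem_univ v0⟩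
    nlinarith [hlow, hup, hxx]
end

section
/- For the path graph A_n on n vertices, the matrix I + √τ·B is positive semidefinite if and only if τ ≤ 1/(4cos²(π/(n+1))). -/
open Real Finset Matrix

def pathMatrix (n : ℕ) : Matrix (Fin n) (Fin n) ℝ :=
  Matrix.of fun i j => if (i : ℕ) + 1 = (j : ℕ) ∨ (j : ℕ) + 1 = (i : ℕ) then 1 else 0

namespace Stmt10

noncomputable def θ (n : ℕ) : ℝ := Real.pi / (n + 1)

noncomputable def s (n k : ℕ) : ℝ := Real.sin (k * θ n)

noncomputable def A (n k : ℕ) : ℝ := s n (k+2) / (2 * s n (k+1))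
noncomputable def B (n k : ℕ) : ℝ := s n (k+1) / (2 * s n (k+2))

variable {n : ℕ}

lemma hθpos : 0 < θ n := by
  have : (0:ℝ) < (n:ℝ) + 1 := by positivity
  exact div_pos Real.pi_pos this

lemma hθtop (hn : 2 ≤ n) : θ n < Real.pi / 2 := by
  have h3 : (3:ℝ) ≤ (n:ℝ) + 1 := by
    have : (2:ℝ) ≤ (n:ℝ) := by exact_mod_cast hn
    linarith
  have : θ n ≤ Real.pi / 3 := by
    unfold θ
    apply div_le_div_of_nonneg_left Real.pi_pos.le (by linarith) h3
  linarith [Real.pi_pos]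

lemma cospos (hn : 2 ≤ n) : 0 < Real.cos (θ n) :=
  Real.cos_pos_of_mem_Ioo ⟨by linarith [hθpos (n := n), Real.pi_pos], hθtop hn⟩

lemma sinpos {k : ℕ} (hk1 : 1 ≤ k) (hkn : k ≤ n) : 0 < s n k := by
  apply Real.sin_pos_of_pos_of_lt_pi
  · have h0 := hθpos (n := n)
    have h1 : (0:ℝ) < (k:ℝ) := by exact_mod_cast hk1
    exact mul_pos h1 h0
  · have hk : (k:ℝ) < (n:ℝ) + 1 := by exact_mod_cast Nat.lt_succ_of_le hkn
    have : (k:ℝ) * θ n < ((n:ℝ)+1) * θ n := by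
      apply mul_lt_mul_of_pos_right hk hθpos
    have heq : ((n:ℝ)+1) * θ n = Real.pi := by
      unfold θ; field_simp
    linarith

lemma srec (k : ℕ) : s n (k+2) + s n k = 2 * Real.cos (θ n) * s n (k+1) := by
  unfold s
  push_cast
  have h1 : ((k:ℝ)+2) * θ n = ((k:ℝ)+1) * θ n + θ n := by ring
  have h2 : (k:ℝ) * θ n = ((k:ℝ)+1) * θ n - θ n := by ring
  rw [h1, h2, Real.sin_add, Real.sin_sub]
  ring

lemma slast (hn : 2 ≤ n) : s n n = s n 1 := by
  unfold s
  have heq : (n:ℝ) * θ n = Real.pi - 1 * θ n := by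
    unfold θ; field_simp; ring
  rw [heq, Real.sin_pi_sub]
  norm_num

lemma s2 : s n 2 = 2 * Real.cos (θ n) * s n 1 := by
  have := srec (n := n) 0
  simpa [s] using this

lemma sprev (hn : 2 ≤ n) : s n (n-1) = 2 * Real.cos (θ n) * s n 1 := by
  have h : n - 1 + 2 = n + 1 := by omega
  have hrec := srec (n := n) (n-1)
  rw [h] at hrec
  have h2 : n - 1 + 1 = n := by omega
  rw [h2] at hrec
  have hn1 : s n (n+1) = 0 := by
    unfold s θ
    have : ((n:ℝ)+1) * (Real.pi / ((n:ℝ)+1)) = Real.pi := by field_simp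
    push_cast
    rw [this, Real.sin_pi]
  rw [slast hn] at hrec
  linarith

lemma A0 (hn : 2 ≤ n) : A n 0 = Real.cos (θ n) := by
  have h1 : s n 1 ≠ 0 := (sinpos le_rfl (by omega)).ne'
  unfold A
  rw [show (0:ℕ)+2 = 2 from rfl, s2]
  field_simp

lemma Blast (hn : 2 ≤ n) : B n (n-2) = Real.cos (θ n) := by
  have h1 : n - 2 + 1 = n - 1 := by omega
  have h2 : n - 2 + 2 = n := by omega
  unfold B
  rw [h1, h2, sprev hn, slast hn]
  have hs1 : s n 1 ≠ 0 := (sinpos le_rfl (by omega)).ne'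
  field_simp

lemma AB {k : ℕ} (hk : k + 2 ≤ n) : A n k * B n k = 1/4 := by
  have h1 : s n (k+1) ≠ 0 := (sinpos (by omega) (by omega)).ne'
  have h2 : s n (k+2) ≠ 0 := (sinpos (by omega) hk).ne'
  unfold A B
  field_simp
  ring

lemma Apos {k : ℕ} (hk : k + 2 ≤ n) : 0 < A n k := by
  have h1 := sinpos (n := n) (k := k+1) (by omega) (by omega)
  have h2 := sinpos (n := n) (k := k+2) (by omega) hk
  exact div_pos h2 (by linarith)

lemma AplusB {k : ℕ} (hk : k + 3 ≤ n) : A n (k+1) + B n k = Real.cos (θ n) := by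
  have h2 : s n (k+2) ≠ 0 := (sinpos (by omega) (by omega)).ne'
  have hrec := srec (n := n) (k+1)
  unfold A B
  have e1 : k + 1 + 2 = k + 3 := by omega
  have e2 : k + 1 + 1 = k + 2 := by omega
  rw [e1, e2]
  rw [show k+1+2 = k+3 from rfl, show k+1+1 = k+2 from rfl] at hrec
  field_simp
  linarith


lemma coeff_sum (hn : 2 ≤ n) (y : ℕ → ℝ) :
    ∑ k ∈ range (n-1), (A n k * y k ^ 2 + B n k * y (k+1) ^ 2)
      = Real.cos (θ n) * ∑ k ∈ range n, y k ^ 2 := by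
  obtain ⟨m, rfl⟩ : ∃ m, n = m + 2 := ⟨n - 2, by omega⟩
  have hm1 : m + 2 - 1 = m + 1 := by omega
  rw [hm1]
  rw [sum_add_distrib, sum_range_succ' (fun k => A (m+2) k * y k ^ 2) m,
    sum_range_succ (fun k => B (m+2) k * y (k+1) ^ 2) m]
  have hmid : ∀ k ∈ range m, A (m+2) (k+1) * y (k+1) ^ 2 + B (m+2) k * y (k+1) ^ 2
      = Real.cos (θ (m+2)) * y (k+1) ^ 2 := by
    intro k hk
    rw [mem_range] at hk
    rw [← add_mul, AplusB (by omega)]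
  have hA0 : A (m+2) 0 = Real.cos (θ (m+2)) := A0 (by omega)
  have hBl : B (m+2) m = Real.cos (θ (m+2)) := by
    have := Blast (n := m+2) (by omega)
    simpa using this
  rw [sum_range_succ (fun k => y k ^ 2) (m+1), sum_range_succ' (fun k => y k ^ 2) m]
  rw [hA0, hBl, mul_add, mul_add]
  have hc : ∑ k ∈ range m, A (m+2) (k+1) * y (k+1)^2 + ∑ k ∈ range m, B (m+2) k * y (k+1)^2
      = ∑ k ∈ range m, Real.cos (θ (m+2)) * y (k+1)^2 := by
    rw [← sum_add_distrib]; exact Finset.sum_congr rfl hmid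
  rw [Finset.mul_sum]
  linarith [hc]

/-- extension of a `Fin n` vector to `ℕ` by zero -/
noncomputable def Y (n : ℕ) (x : Fin n → ℝ) (k : ℕ) : ℝ :=
  if h : k < n then x ⟨k, h⟩ else 0

lemma dot_self (x : Fin n → ℝ) : x ⬝ᵥ x = ∑ k ∈ range n, Y n x k ^ 2 := by
  rw [dotProduct]
  rw [← Fin.sum_univ_eq_sum_range (fun k => Y n x k ^ 2) n]
  apply Finset.sum_congr rfl
  intro i _
  simp [Y, i.isLt, sq]

lemma form_eq (hn : 1 ≤ n) (x : Fin n → ℝ) :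
    x ⬝ᵥ (pathMatrix n *ᵥ x) = 2 * ∑ k ∈ range (n-1), Y n x k * Y n x (k+1) := by
  have hsplit : x ⬝ᵥ (pathMatrix n *ᵥ x)
      = (∑ i : Fin n, ∑ j : Fin n, if (i:ℕ)+1 = (j:ℕ) then x i * x j else 0)
        + ∑ i : Fin n, ∑ j : Fin n, if (j:ℕ)+1 = (i:ℕ) then x i * x j else 0 := by
    rw [dotProduct, ← sum_add_distrib]
    apply Finset.sum_congr rfl
    intro i _
    rw [Matrix.mulVec, dotProduct, Finset.mul_sum, ← sum_add_distrib]
    apply Finset.sum_congr rfl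
    intro j _
    simp only [pathMatrix, Matrix.of_apply]
    by_cases h1 : (i:ℕ)+1 = (j:ℕ)
    · have h2 : ¬((j:ℕ)+1 = (i:ℕ)) := by omega
      simp [h1, h2]; try ring
    · by_cases h2 : (j:ℕ)+1 = (i:ℕ) <;> simp [h1, h2] <;> try ring
  have hswap : (∑ i : Fin n, ∑ j : Fin n, if (j:ℕ)+1 = (i:ℕ) then x i * x j else 0)
      = ∑ i : Fin n, ∑ j : Fin n, if (i:ℕ)+1 = (j:ℕ) then x i * x j else 0 := by
    rw [Finset.sum_comm]
    apply Finset.sum_congr rfl; intro i _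
    apply Finset.sum_congr rfl; intro j _
    by_cases h : (i:ℕ)+1 = (j:ℕ) <;> simp [h, mul_comm]
  have hinner : ∀ i : Fin n,
      (∑ j : Fin n, if (i:ℕ)+1 = (j:ℕ) then x i * x j else 0)
        = Y n x (i:ℕ) * Y n x ((i:ℕ)+1) := by
    intro i
    by_cases h : (i:ℕ)+1 < n
    · have : (∑ j : Fin n, if (i:ℕ)+1 = (j:ℕ) then x i * x j else 0)
          = ∑ j : Fin n, if j = (⟨(i:ℕ)+1, h⟩ : Fin n) then x i * x j else 0 := by
        apply Finset.sum_congr rfl; intro j _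
        congr 1
        simp [Fin.ext_iff, eq_comm]
      rw [this, Finset.sum_ite_eq' Finset.univ (⟨(i:ℕ)+1, h⟩ : Fin n) (fun j => x i * x j)]
      simp [Y, h, i.isLt]
    · have h2 : Y n x ((i:ℕ)+1) = 0 := by simp [Y, h]
      rw [h2, mul_zero]
      apply Finset.sum_eq_zero
      intro j _
      have : (i:ℕ)+1 ≠ (j:ℕ) := by have := j.isLt; omega
      simp [this]
  rw [hsplit, hswap, Finset.sum_congr rfl (fun i _ => hinner i), two_mul]
  have : (∑ i : Fin n, Y n x (i:ℕ) * Y n x ((i:ℕ)+1))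
      = ∑ k ∈ range n, Y n x k * Y n x (k+1) :=
    Fin.sum_univ_eq_sum_range (fun k => Y n x k * Y n x (k+1)) n
  rw [this]
  obtain ⟨m, rfl⟩ : ∃ m, n = m + 1 := ⟨n - 1, by omega⟩
  rw [sum_range_succ]
  simp [Y]

lemma quad (hn : 1 ≤ n) (s' : ℝ) (x : Fin n → ℝ) :
    x ⬝ᵥ (((1 : Matrix (Fin n) (Fin n) ℝ) + s' • pathMatrix n) *ᵥ x)
      = (∑ k ∈ range n, Y n x k ^ 2)
        + s' * (2 * ∑ k ∈ range (n-1), Y n x k * Y n x (k+1)) := by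
  rw [Matrix.add_mulVec, Matrix.one_mulVec, Matrix.smul_mulVec,
    dotProduct_add, dotProduct_smul, dot_self, form_eq hn]
  rfl


lemma term_ge {a b u v : ℝ} (ha : 0 < a) (hab : a * b = 1/4) :
    -(a * u^2 + b * v^2) ≤ u * v := by
  nlinarith [sq_nonneg (2*a*u + v), ha, hab, sq_nonneg v, mul_pos ha ha]

lemma sum_lb (hn : 2 ≤ n) (y : ℕ → ℝ) :
    -(Real.cos (θ n) * ∑ k ∈ range n, y k ^ 2)
      ≤ ∑ k ∈ range (n-1), y k * y (k+1) := by
  rw [← coeff_sum hn y, ← Finset.sum_neg_distrib]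
  apply Finset.sum_le_sum
  intro k hk
  rw [mem_range] at hk
  exact term_ge (Apos (by omega)) (AB (by omega))

lemma herm (c : ℝ) : ((1 : Matrix (Fin n) (Fin n) ℝ) + c • pathMatrix n).IsHermitian := by
  unfold Matrix.IsHermitian
  ext i j
  simp only [Matrix.conjTranspose_apply, Matrix.add_apply, Matrix.one_apply,
    Matrix.smul_apply, pathMatrix, Matrix.of_apply, star_trivial, smul_eq_mul]
  by_cases h3 : i = j
  · simp [h3]
  · have h4 : ¬ j = i := fun h => h3 h.symm
    simp [h3, h4, or_comm]

lemma psd_of_le (hn : 2 ≤ n) (τ : ℝ) (hτ : 0 < τ)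
    (hle : τ ≤ 1 / (4 * Real.cos (θ n) ^ 2)) :
    ((1 : Matrix (Fin n) (Fin n) ℝ) + Real.sqrt τ • pathMatrix n).PosSemidef := by
  have hc : 0 < Real.cos (θ n) := cospos hn
  have hsq : Real.sqrt τ ≤ 1 / (2 * Real.cos (θ n)) := by
    have h1 : (1 : ℝ) / (4 * Real.cos (θ n) ^ 2) = (1 / (2 * Real.cos (θ n)))^2 := by
      field_simp; ring
    rw [h1] at hle
    calc Real.sqrt τ ≤ Real.sqrt ((1 / (2 * Real.cos (θ n)))^2) := Real.sqrt_le_sqrt hle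
      _ = 1 / (2 * Real.cos (θ n)) := Real.sqrt_sq (by positivity)
  have hkey : 2 * Real.cos (θ n) * Real.sqrt τ ≤ 1 := by
    calc 2 * Real.cos (θ n) * Real.sqrt τ
        ≤ 2 * Real.cos (θ n) * (1 / (2 * Real.cos (θ n))) :=
          mul_le_mul_of_nonneg_left hsq (by positivity)
      _ = 1 := by field_simp
  refine Matrix.PosSemidef.of_dotProduct_mulVec_nonneg (herm _) fun x => ?_
  rw [star_trivial, quad (by omega)]
  have hb := sum_lb hn (Y n x)
  have hT : 0 ≤ ∑ k ∈ range n, Y n x k ^ 2 := by positivity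
  have hs0 : 0 ≤ Real.sqrt τ := Real.sqrt_nonneg τ
  nlinarith [mul_le_mul_of_nonneg_left hb hs0]

lemma le_of_psd (hn : 2 ≤ n) (τ : ℝ) (hτ : 0 < τ)
    (hpsd : ((1 : Matrix (Fin n) (Fin n) ℝ) + Real.sqrt τ • pathMatrix n).PosSemidef) :
    τ ≤ 1 / (4 * Real.cos (θ n) ^ 2) := by
  have hc : 0 < Real.cos (θ n) := cospos hn
  set x : Fin n → ℝ := fun i => (-1)^(i:ℕ) * s n ((i:ℕ)+1) with hx
  have hY : ∀ k, k < n → Y n x k = (-1)^k * s n (k+1) := by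
    intro k hk; simp [Y, hk, hx]
  have hterm : ∀ k ∈ range (n-1),
      Y n x k * Y n x (k+1) = -(A n k * Y n x k ^ 2 + B n k * Y n x (k+1) ^ 2) := by
    intro k hk
    rw [mem_range] at hk
    rw [hY k (by omega), hY (k+1) (by omega)]
    have hu : 0 < s n (k+1) := sinpos (by omega) (by omega)
    have hw : 0 < s n (k+2) := sinpos (by omega) (by omega)
    have hp : ((-1:ℝ)^k)^2 = 1 := by
      rw [← pow_mul, mul_comm, pow_mul]; norm_num
    unfold A B
    have e : k + 1 + 1 = k + 2 := rfl
    rw [e, pow_succ]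
    field_simp
    nlinarith [hp, hu, hw]
  have hsum : ∑ k ∈ range (n-1), Y n x k * Y n x (k+1)
      = -(Real.cos (θ n) * ∑ k ∈ range n, Y n x k ^ 2) := by
    rw [Finset.sum_congr rfl hterm, Finset.sum_neg_distrib, coeff_sum hn]
  have hval := hpsd.dotProduct_mulVec_nonneg x
  rw [star_trivial, quad (by omega), hsum] at hval
  have hT : (s n 1)^2 ≤ ∑ k ∈ range n, Y n x k ^ 2 := by
    have h0 : (0:ℕ) ∈ range n := mem_range.mpr (by omega)
    have := Finset.single_le_sum (f := fun k => Y n x k ^ 2)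
      (fun k _ => sq_nonneg _) h0
    simpa [hY 0 (by omega)] using this
  have hs1 : 0 < s n 1 := sinpos le_rfl (by omega)
  have hTpos : 0 < ∑ k ∈ range n, Y n x k ^ 2 := by
    have h1 : 0 < (s n 1)^2 := by positivity
    linarith
  have hkey : 2 * Real.sqrt τ * Real.cos (θ n) ≤ 1 := by
    by_contra hcon
    push_neg at hcon
    nlinarith [hval, hTpos]
  have hst : Real.sqrt τ ^ 2 = τ := Real.sq_sqrt hτ.le
  have hnn : 0 ≤ 2 * Real.sqrt τ * Real.cos (θ n) := by positivity
  have h2 : (2 * Real.sqrt τ * Real.cos (θ n))^2 ≤ 1 := by nlinarith [hkey, hnn]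
  rw [le_div_iff₀ (by positivity), ← hst]
  nlinarith [h2]

end Stmt10

/-- For the path graph on n ≥ 2 vertices with adjacency matrix B and τ > 0,
I + √τ·B is positive semidefinite iff τ ≤ 1/(4cos²(π/(n+1))). -/
theorem stmt10 (n : ℕ) (hn : 2 ≤ n) (τ : ℝ) (hτ : 0 < τ) :
    ((1 : Matrix (Fin n) (Fin n) ℝ) + Real.sqrt τ • pathMatrix n).PosSemidef ↔
      τ ≤ 1 / (4 * Real.cos (Real.pi / (n + 1)) ^ 2) := by
  constructor
  · exact Stmt10.le_of_psd hn τ hτ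
  · exact Stmt10.psd_of_le hn τ hτ
end

section
/- If Γ is a finite simple graph each of whose connected components is a proper subgraph of one of the extended Dynkin diagrams Ã_n, D̃_n, Ẽ_6, Ẽ_7, Ẽ_8, then the largest eigenvalue of the adjacency matrix of Γ is strictly less than 2. -/
open Finset


/-- The cycle graph Ãₙ₋₁ on n vertices. -/
def cycleGraph (n : ℕ) : SimpleGraph (Fin n) :=
  SimpleGraph.fromRel fun i j => ((i : ℕ) + 1) % n = (j : ℕ)

/-- The extended Dynkin diagram D̃ₙ on n+1 vertices: central path 2 − ⋯ − (n−2) with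
leaves 0, 1 attached to vertex 2 and leaves n−1, n attached to vertex n−2. -/
def DtildeGraph (n : ℕ) : SimpleGraph (Fin (n + 1)) :=
  SimpleGraph.fromRel fun i j =>
    ((i : ℕ) = 0 ∧ (j : ℕ) = 2) ∨ ((i : ℕ) = 1 ∧ (j : ℕ) = 2) ∨
      (2 ≤ (i : ℕ) ∧ (j : ℕ) = (i : ℕ) + 1 ∧ (j : ℕ) ≤ n - 2) ∨
      ((i : ℕ) = n - 2 ∧ (j : ℕ) = n - 1) ∨ ((i : ℕ) = n - 2 ∧ (j : ℕ) = n)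

/-- The extended Dynkin diagram Ẽ₆: path 0 − ⋯ − 4, leaf branch 2 − 5 − 6. -/
def E6tGraph : SimpleGraph (Fin 7) :=
  SimpleGraph.fromRel fun i j =>
    ((i : ℕ) + 1 = (j : ℕ) ∧ (j : ℕ) ≤ 4) ∨ ((i : ℕ) = 2 ∧ (j : ℕ) = 5) ∨
      ((i : ℕ) = 5 ∧ (j : ℕ) = 6)

/-- The extended Dynkin diagram Ẽ₇: path 0 − ⋯ − 6, leaf 7 attached to vertex 3. -/
def E7tGraph : SimpleGraph (Fin 8) :=
  SimpleGraph.fromRel fun i j =>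
    ((i : ℕ) + 1 = (j : ℕ) ∧ (j : ℕ) ≤ 6) ∨ ((i : ℕ) = 3 ∧ (j : ℕ) = 7)

/-- The extended Dynkin diagram Ẽ₈: path 0 − ⋯ − 7, leaf 8 attached to vertex 2. -/
def E8tGraph : SimpleGraph (Fin 9) :=
  SimpleGraph.fromRel fun i j =>
    ((i : ℕ) + 1 = (j : ℕ) ∧ (j : ℕ) ≤ 7) ∨ ((i : ℕ) = 2 ∧ (j : ℕ) = 8)

/-- `H` is (isomorphic to) a proper subgraph of `G`: it embeds into `G` preserving
adjacency, missing at least one vertex or at least one edge of `G`. -/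
def ProperlyEmbeds {V W : Type*} (H : SimpleGraph V) (G : SimpleGraph W) : Prop :=
  ∃ f : V ↪ W, (∀ i j, H.Adj i j → G.Adj (f i) (f j)) ∧
    (¬ Function.Surjective f ∨ ∃ i j, G.Adj (f i) (f j) ∧ ¬ H.Adj i j)


theorem key_lemma {V W : Type*} [Fintype V] [Fintype W]
    (H : SimpleGraph V) (G : SimpleGraph W) [DecidableRel H.Adj] [DecidableRel G.Adj]
    (hG : G.Preconnected)
    (w : W → ℝ) (hw : ∀ x, 0 < w x)
    (heig : ∀ x, ∑ y, (if G.Adj x y then w y else 0) = 2 * w x)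
    (hemb : ∃ f : V ↪ W, (∀ i j, H.Adj i j → G.Adj (f i) (f j)) ∧
      (¬ Function.Surjective f ∨ ∃ i j, G.Adj (f i) (f j) ∧ ¬ H.Adj i j))
    (μ : ℝ) (hμ : 2 ≤ μ)
    (u : V → ℝ) (hu : ∀ i, 0 ≤ u i) (i0 : V) (hi0 : 0 < u i0)
    (hsub : ∀ i, μ * u i ≤ ∑ j, if H.Adj i j then u j else 0) : False := by
  obtain ⟨f, hfadj, hprop⟩ := hemb
  set U : W → ℝ := Function.extend f u (0 : W → ℝ) with hUdef
  have hUf : ∀ i, U (f i) = u i := fun i => f.injective.extend_apply u (0 : W → ℝ) i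
  have hU0 : ∀ x, (¬ ∃ i, f i = x) → U x = 0 := fun x hx =>
    Function.extend_apply' u (0 : W → ℝ) x hx
  have hUnn : ∀ x, 0 ≤ U x := by
    intro x
    by_cases h : ∃ i, f i = x
    · obtain ⟨i, rfl⟩ := h; rw [hUf]; exact hu i
    · rw [hU0 x h]
  set AU : W → ℝ := fun x => ∑ y, if G.Adj x y then U y else 0 with hAUdef
  have hAUnn : ∀ x, 0 ≤ AU x :=
    fun x => Finset.sum_nonneg fun y _ => by by_cases h : G.Adj x y <;> simp [h, hUnn y]
  -- comparison of H-sum with restricted G-sum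
  have hptwise : ∀ i j : V, (if H.Adj i j then u j else 0) ≤ (if G.Adj (f i) (f j) then U (f j) else 0) := by
    intro i j
    by_cases h : H.Adj i j
    · rw [if_pos h, if_pos (hfadj i j h), hUf]
    · rw [if_neg h]
      by_cases h2 : G.Adj (f i) (f j) <;> simp [h2, hUnn]
  have hrestr : ∀ i : V, ∑ j, (if G.Adj (f i) (f j) then U (f j) else 0) ≤ AU (f i) := by
    intro i
    have h1 : ∑ j, (if G.Adj (f i) (f j) then U (f j) else 0)
        = ∑ y ∈ univ.map f, (if G.Adj (f i) y then U y else 0) := by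
      rw [Finset.sum_map]
    rw [h1, hAUdef]
    exact Finset.sum_le_sum_of_subset_of_nonneg (Finset.subset_univ _)
      (fun y _ _ => by by_cases h : G.Adj (f i) y <;> simp [h, hUnn y])
  -- Step A
  have hA : ∀ x, μ * U x ≤ AU x := by
    intro x
    by_cases h : ∃ i, f i = x
    · obtain ⟨i, rfl⟩ := h
      rw [hUf]
      calc μ * u i ≤ ∑ j, (if H.Adj i j then u j else 0) := hsub i
        _ ≤ ∑ j, (if G.Adj (f i) (f j) then U (f j) else 0) :=
            Finset.sum_le_sum fun j _ => hptwise i j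
        _ ≤ AU (f i) := hrestr i
    · rw [hU0 x h, mul_zero]; exact hAUnn x
  -- Step B : ∑ x, AU x * w x = 2 * ∑ x, U x * w x
  have hB : ∑ x, AU x * w x = 2 * ∑ x, U x * w x := by
    have h1 : ∀ x, AU x * w x = ∑ y, (if G.Adj x y then U y * w x else 0) := by
      intro x
      rw [hAUdef]
      rw [Finset.sum_mul]
      exact Finset.sum_congr rfl fun y _ => by by_cases h : G.Adj x y <;> simp [h]
    calc ∑ x, AU x * w x = ∑ x, ∑ y, (if G.Adj x y then U y * w x else 0) := by
          exact Finset.sum_congr rfl fun x _ => h1 x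
      _ = ∑ y, ∑ x, (if G.Adj x y then U y * w x else 0) := Finset.sum_comm
      _ = ∑ y, U y * (2 * w y) := by
          refine Finset.sum_congr rfl fun y _ => ?_
          rw [← heig y, Finset.mul_sum]
          refine Finset.sum_congr rfl fun x _ => ?_
          have : G.Adj x y ↔ G.Adj y x := ⟨fun h => h.symm, fun h => h.symm⟩
          by_cases h : G.Adj y x
          · rw [if_pos h, if_pos (this.mpr h)]
          · rw [if_neg h, if_neg (fun h2 => h (this.mp h2)), mul_zero]
      _ = 2 * ∑ x, U x * w x := by rw [Finset.mul_sum]; exact Finset.sum_congr rfl fun x _ => by ring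
  -- positivity of total
  have hT : 0 < ∑ x, U x * w x := by
    refine Finset.sum_pos' (fun x _ => mul_nonneg (hUnn x) (hw x).le) ⟨f i0, Finset.mem_univ _, ?_⟩
    rw [hUf]; exact mul_pos hi0 (hw (f i0))
  -- μ = 2 and pointwise equality
  have hμ2 : μ = 2 := by
    have h1 : μ * ∑ x, U x * w x ≤ 2 * ∑ x, U x * w x := by
      rw [← hB, Finset.mul_sum]
      exact Finset.sum_le_sum fun x _ => by
        have := mul_le_mul_of_nonneg_right (hA x) (hw x).le
        nlinarith [this]
    nlinarith [h1, hT]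
  subst hμ2
  have hzero : ∑ x, (AU x - 2 * U x) * w x = 0 := by
    have : ∑ x, (AU x - 2 * U x) * w x = (∑ x, AU x * w x) - 2 * ∑ x, U x * w x := by
      rw [Finset.mul_sum, ← Finset.sum_sub_distrib]
      exact Finset.sum_congr rfl fun x _ => by ring
    rw [this, hB]; ring
  have heq : ∀ x, AU x = 2 * U x := by
    intro x
    have hnn : ∀ y ∈ univ, (0:ℝ) ≤ (AU y - 2 * U y) * w y := fun y _ =>
      mul_nonneg (by linarith [hA y]) (hw y).le
    have := (Finset.sum_eq_zero_iff_of_nonneg hnn).mp hzero x (Finset.mem_univ x)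
    have hwx := (hw x).ne'
    have : AU x - 2 * U x = 0 := by
      rcases mul_eq_zero.mp this with h | h
      · exact h
      · exact absurd h hwx
    linarith
  -- positivity propagation
  have hstep : ∀ x y, 0 < U x → G.Adj x y → 0 < U y := by
    intro x y hx hxy
    have h1 : U x ≤ AU y := by
      have : U x = (if G.Adj y x then U x else 0) := by rw [if_pos hxy.symm]
      rw [this, hAUdef]
      exact Finset.single_le_sum (f := fun z => if G.Adj y z then U z else 0)
        (fun z _ => by by_cases h : G.Adj y z <;> simp [h, hUnn z]) (Finset.mem_univ x)
    rw [heq y] at h1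
    linarith
  have hpos : ∀ x, 0 < U x := by
    have hwalk : ∀ {a b : W} (_ : G.Walk a b), 0 < U a → 0 < U b := by
      intro a b p
      induction p with
      | nil => exact id
      | cons h p ih => exact fun ha => ih (hstep _ _ ha h)
    intro x
    obtain ⟨p⟩ := hG (f i0) x
    exact hwalk p (by rw [hUf]; exact hi0)
  -- final contradiction
  rcases hprop with hns | ⟨i, j, hGij, hHij⟩
  · apply hns
    intro x
    by_contra hx
    have : ¬ ∃ i, f i = x := fun ⟨i, hi⟩ => hx ⟨i, hi⟩
    have := hU0 x this
    linarith [hpos x]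
  · have hlt : ∑ k, (if H.Adj i k then u k else 0) < ∑ k, (if G.Adj (f i) (f k) then U (f k) else 0) := by
      refine Finset.sum_lt_sum (fun k _ => hptwise i k) ⟨j, Finset.mem_univ j, ?_⟩
      rw [if_neg hHij, if_pos hGij]
      exact hpos (f j)
    have h1 := hsub i
    have h2 := hrestr i
    have h3 : AU (f i) = 2 * u i := by rw [heq (f i), hUf]
    linarith

lemma cyc_adj {n : ℕ} [NeZero n] (hn : 3 ≤ n) (i j : Fin n) :
    (cycleGraph n).Adj i j ↔ (j = i + 1 ∨ j = i - 1) := by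
  have hval : ∀ a : Fin n, ((a + 1 : Fin n) : ℕ) = ((a : ℕ) + 1) % n := by
    intro a
    rw [Fin.val_add, Fin.val_one']
    rw [Nat.mod_eq_of_lt (show 1 < n by omega)]
  have hr : ∀ a b : Fin n, (((a : ℕ) + 1) % n = (b : ℕ)) ↔ b = a + 1 := by
    intro a b
    rw [Fin.ext_iff, hval]
    exact eq_comm
  have hone : (1 : Fin n) ≠ 0 := by
    rw [Ne, Fin.ext_iff, Fin.val_one', Fin.val_zero]
    rw [Nat.mod_eq_of_lt (show 1 < n by omega)]
    simp
  rw [cycleGraph, SimpleGraph.fromRel_adj]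
  constructor
  · rintro ⟨hne, h | h⟩
    · exact Or.inl ((hr i j).mp h)
    · right
      rw [eq_sub_iff_add_eq]
      exact ((hr j i).mp h).symm
  · intro h
    refine ⟨?_, ?_⟩
    · rcases h with rfl | rfl
      · intro h
        exact hone (left_eq_add.mp h)
      · intro h
        exact hone (sub_eq_self.mp h.symm)
    · rcases h with rfl | rfl
      · exact Or.inl ((hr i _).mpr rfl)
      · refine Or.inr ((hr _ i).mpr ?_)
        rw [sub_add_cancel]

instance (n : ℕ) : DecidableRel (cycleGraph n).Adj := fun a b =>
  decidable_of_iff _ (SimpleGraph.fromRel_adj _ a b).symm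

lemma cyc_eig {n : ℕ} [NeZero n] (hn : 3 ≤ n) :
    ∀ x : Fin n, ∑ y, (if (cycleGraph n).Adj x y then (1:ℝ) else 0) = 2 * 1 := by
  intro x
  have hne : x + 1 ≠ x - 1 := by
    intro h
    have h2 : (1 : Fin n) + 1 = 0 := by
      have := congrArg (fun z => z - x + 1) h
      simpa [sub_eq_iff_eq_add, add_comm, add_assoc, add_left_comm] using this
    have : ((1 : Fin n) + 1 : Fin n).val = 0 := by rw [h2]; rfl
    rw [Fin.val_add, Fin.val_one'] at this
    rw [Nat.mod_eq_of_lt (show 1 < n by omega)] at this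
    rw [Nat.mod_eq_of_lt (show 1 + 1 < n by omega)] at this
    omega
  have hfilter : ∀ y : Fin n, (cycleGraph n).Adj x y ↔ y ∈ ({x + 1, x - 1} : Finset (Fin n)) := by
    intro y
    rw [cyc_adj hn]
    simp
  calc ∑ y, (if (cycleGraph n).Adj x y then (1:ℝ) else 0)
      = ∑ y, (if y ∈ ({x + 1, x - 1} : Finset (Fin n)) then (1:ℝ) else 0) := by
        refine Finset.sum_congr rfl fun y _ => ?_
        by_cases h : (cycleGraph n).Adj x y
        · rw [if_pos h, if_pos ((hfilter y).mp h)]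
        · rw [if_neg h, if_neg (fun hm => h ((hfilter y).mpr hm))]
    _ = ∑ y ∈ ({x + 1, x - 1} : Finset (Fin n)), (1:ℝ) := by
        rw [Finset.sum_ite_mem, Finset.univ_inter]
    _ = 2 * 1 := by
        rw [Finset.sum_pair hne]
        norm_num

lemma cyc_conn {n : ℕ} (hn : 3 ≤ n) : (cycleGraph n).Preconnected := by
  have hstep : ∀ m (hm : m + 1 < n), (cycleGraph n).Adj ⟨m, by omega⟩ ⟨m + 1, hm⟩ := by
    intro m hm
    rw [cycleGraph, SimpleGraph.fromRel_adj]
    constructor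
    · intro h
      rw [Fin.mk.injEq] at h
      omega
    · left
      simp [Nat.mod_eq_of_lt hm]
  have hreach : ∀ m (hm : m < n), (cycleGraph n).Reachable ⟨0, by omega⟩ ⟨m, hm⟩ := by
    intro m
    induction m with
    | zero => exact fun _ => SimpleGraph.Reachable.refl _
    | succ k ih =>
        intro hm
        exact (ih (by omega)).trans (hstep k hm).reachable
  intro x y
  have hx := hreach x.val x.isLt
  have hy := hreach y.val y.isLt
  simp only [Fin.eta] at hx hy
  exact hx.symm.trans hy

def rrD (n a b : ℕ) : Prop :=
  (a = 0 ∧ b = 2) ∨ (a = 1 ∧ b = 2) ∨ (2 ≤ a ∧ b = a + 1 ∧ b ≤ n - 2) ∨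
    (a = n - 2 ∧ b = n - 1) ∨ (a = n - 2 ∧ b = n)

def QD (n a b : ℕ) : Prop := a ≠ b ∧ (rrD n a b ∨ rrD n b a)

noncomputable def wvD (n m : ℕ) : ℝ :=
  if m = 0 ∨ m = 1 ∨ m = n - 1 ∨ m = n then 1 else 2

lemma wvD_one {n m : ℕ} (h : m = 0 ∨ m = 1 ∨ m = n - 1 ∨ m = n) : wvD n m = 1 := if_pos h
lemma wvD_two {n m : ℕ} (h : ¬(m = 0 ∨ m = 1 ∨ m = n - 1 ∨ m = n)) : wvD n m = 2 := if_neg h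

instance (n : ℕ) : DecidableRel (DtildeGraph n).Adj := fun a b =>
  decidable_of_iff _ (SimpleGraph.fromRel_adj _ a b).symm

lemma Dt_adj (n : ℕ) (x y : Fin (n + 1)) :
    (DtildeGraph n).Adj x y ↔ QD n x.val y.val := by
  rw [DtildeGraph, SimpleGraph.fromRel_adj]
  unfold QD rrD
  rw [Ne, Ne, Fin.ext_iff]

open Classical in
set_option maxHeartbeats 1000000 in
lemma Dt_sum (n : ℕ) (hn : 4 ≤ n) (a : ℕ) (ha : a ≤ n) :
    ∑ m ∈ Finset.range (n + 1), (if QD n a m then wvD n m else 0) = 2 * wvD n a := by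
  have hterm : ∀ (s : Finset ℕ), (∀ m, QD n a m → m ∈ s) → s ⊆ Finset.range (n+1) →
      ∑ m ∈ Finset.range (n + 1), (if QD n a m then wvD n m else 0)
        = ∑ m ∈ s, (if QD n a m then wvD n m else 0) := by
    intro s hs hsub
    refine (Finset.sum_subset hsub ?_).symm
    intro m _ hm
    exact if_neg (fun hq => hm (hs m hq))
  by_cases h0 : a = 0
  · rw [hterm {2} (fun m hq => by unfold QD rrD at hq; simp only [Finset.mem_singleton]; omega)
      (fun m hm => by simp only [Finset.mem_singleton] at hm; simp only [Finset.mem_range]; omega)]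
    have hq : QD n a 2 := by unfold QD rrD; omega
    have w1 : wvD n a = 1 := wvD_one (by omega)
    have w2 : wvD n 2 = 2 := wvD_two (by omega)
    rw [Finset.sum_singleton, if_pos hq, w1, w2]
    norm_num
  by_cases h1 : a = 1
  · rw [hterm {2} (fun m hq => by unfold QD rrD at hq; simp only [Finset.mem_singleton]; omega)
      (fun m hm => by simp only [Finset.mem_singleton] at hm; simp only [Finset.mem_range]; omega)]
    have hq : QD n a 2 := by unfold QD rrD; omega
    have w1 : wvD n a = 1 := wvD_one (by omega)
    have w2 : wvD n 2 = 2 := wvD_two (by omega)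
    rw [Finset.sum_singleton, if_pos hq, w1, w2]
    norm_num
  by_cases h2 : a = 2
  · by_cases h4 : n = 4
    · rw [hterm {0, 1, 3, 4} (fun m hq => by unfold QD rrD at hq; simp only [Finset.mem_insert, Finset.mem_singleton]; omega)
        (fun m hm => by simp only [Finset.mem_insert, Finset.mem_singleton] at hm; simp only [Finset.mem_range]; omega)]
      have hq0 : QD n a 0 := by unfold QD rrD; omega
      have hq1 : QD n a 1 := by unfold QD rrD; omega
      have hq3 : QD n a 3 := by unfold QD rrD; omega
      have hq4 : QD n a 4 := by unfold QD rrD; omega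
      have w0 : wvD n 0 = 1 := wvD_one (by omega)
      have w1 : wvD n 1 = 1 := wvD_one (by omega)
      have w3 : wvD n 3 = 1 := wvD_one (by omega)
      have w4 : wvD n 4 = 1 := wvD_one (by omega)
      have wa : wvD n a = 2 := wvD_two (by omega)
      rw [show ({0, 1, 3, 4} : Finset ℕ) = insert 0 (insert 1 (insert 3 {4})) from rfl]
      rw [Finset.sum_insert (by simp), Finset.sum_insert (by simp), Finset.sum_insert (by simp),
        Finset.sum_singleton]
      rw [if_pos hq0, if_pos hq1, if_pos hq3, if_pos hq4, w0, w1, w3, w4, wa]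
      norm_num
    · rw [hterm {0, 1, 3} (fun m hq => by unfold QD rrD at hq; simp only [Finset.mem_insert, Finset.mem_singleton]; omega)
        (fun m hm => by simp only [Finset.mem_insert, Finset.mem_singleton] at hm; simp only [Finset.mem_range]; omega)]
      have hq0 : QD n a 0 := by unfold QD rrD; omega
      have hq1 : QD n a 1 := by unfold QD rrD; omega
      have hq3 : QD n a 3 := by unfold QD rrD; omega
      have w0 : wvD n 0 = 1 := wvD_one (by omega)
      have w1 : wvD n 1 = 1 := wvD_one (by omega)
      have w3 : wvD n 3 = 2 := wvD_two (by omega)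
      have wa : wvD n a = 2 := wvD_two (by omega)
      rw [show ({0, 1, 3} : Finset ℕ) = insert 0 (insert 1 {3}) from rfl]
      rw [Finset.sum_insert (by simp), Finset.sum_insert (by simp), Finset.sum_singleton]
      rw [if_pos hq0, if_pos hq1, if_pos hq3, w0, w1, w3, wa]
      norm_num
  by_cases hn2 : a = n - 2
  · have h5 : 5 ≤ n := by omega
    rw [hterm {n - 3, n - 1, n} (fun m hq => by unfold QD rrD at hq; simp only [Finset.mem_insert, Finset.mem_singleton]; omega)
      (fun m hm => by simp only [Finset.mem_insert, Finset.mem_singleton] at hm; simp only [Finset.mem_range]; omega)]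
    have hq0 : QD n a (n - 3) := by unfold QD rrD; omega
    have hq1 : QD n a (n - 1) := by unfold QD rrD; omega
    have hq3 : QD n a n := by unfold QD rrD; omega
    have w0 : wvD n (n - 3) = 2 := wvD_two (by omega)
    have w1 : wvD n (n - 1) = 1 := wvD_one (by omega)
    have w3 : wvD n n = 1 := wvD_one (by omega)
    have wa : wvD n a = 2 := wvD_two (by omega)
    rw [show ({n - 3, n - 1, n} : Finset ℕ) = insert (n - 3) (insert (n - 1) {n}) from rfl]
    rw [Finset.sum_insert (by simp only [Finset.mem_insert, Finset.mem_singleton]; omega),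
      Finset.sum_insert (by simp only [Finset.mem_singleton]; omega), Finset.sum_singleton]
    rw [if_pos hq0, if_pos hq1, if_pos hq3, w0, w1, w3, wa]
    norm_num
  by_cases hn1 : a = n - 1
  · rw [hterm {n - 2} (fun m hq => by unfold QD rrD at hq; simp only [Finset.mem_singleton]; omega)
      (fun m hm => by simp only [Finset.mem_singleton] at hm; simp only [Finset.mem_range]; omega)]
    have hq : QD n a (n - 2) := by unfold QD rrD; omega
    have w1 : wvD n a = 1 := wvD_one (by omega)
    have w2 : wvD n (n - 2) = 2 := wvD_two (by omega)
    rw [Finset.sum_singleton, if_pos hq, w1, w2]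
    norm_num
  by_cases hnn : a = n
  · rw [hterm {n - 2} (fun m hq => by unfold QD rrD at hq; simp only [Finset.mem_singleton]; omega)
      (fun m hm => by simp only [Finset.mem_singleton] at hm; simp only [Finset.mem_range]; omega)]
    have hq : QD n a (n - 2) := by unfold QD rrD; omega
    have w1 : wvD n a = 1 := wvD_one (by omega)
    have w2 : wvD n (n - 2) = 2 := wvD_two (by omega)
    rw [Finset.sum_singleton, if_pos hq, w1, w2]
    norm_num
  · have hint : 3 ≤ a ∧ a ≤ n - 3 := by omega
    rw [hterm {a - 1, a + 1} (fun m hq => by unfold QD rrD at hq; simp only [Finset.mem_insert, Finset.mem_singleton]; omega)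
      (fun m hm => by simp only [Finset.mem_insert, Finset.mem_singleton] at hm; simp only [Finset.mem_range]; omega)]
    have hq0 : QD n a (a - 1) := by unfold QD rrD; omega
    have hq1 : QD n a (a + 1) := by unfold QD rrD; omega
    have w0 : wvD n (a - 1) = 2 := wvD_two (by omega)
    have w1 : wvD n (a + 1) = 2 := wvD_two (by omega)
    have wa : wvD n a = 2 := wvD_two (by omega)
    rw [Finset.sum_pair (by omega)]
    rw [if_pos hq0, if_pos hq1, w0, w1, wa]
    norm_num

lemma Dt_conn (n : ℕ) (hn : 4 ≤ n) : (DtildeGraph n).Preconnected := by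
  have hadj : ∀ (a b : ℕ) (ha : a ≤ n) (hb : b ≤ n), QD n a b →
      (DtildeGraph n).Adj ⟨a, by omega⟩ ⟨b, by omega⟩ := by
    intro a b ha hb h
    rw [Dt_adj]
    exact h
  have hpath : ∀ m, 2 ≤ m → (hm : m ≤ n - 2) →
      (DtildeGraph n).Reachable ⟨2, by omega⟩ ⟨m, by omega⟩ := by
    intro m hm2
    induction m, hm2 using Nat.le_induction with
    | base => exact fun _ => SimpleGraph.Reachable.refl _
    | succ k hk ih =>
        intro hle
        refine (ih (by omega)).trans (SimpleGraph.Adj.reachable ?_)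
        exact hadj k (k + 1) (by omega) (by omega) (by unfold QD rrD; omega)
  have hall : ∀ x : Fin (n + 1), (DtildeGraph n).Reachable ⟨2, by omega⟩ x := by
    rintro ⟨m, hm⟩
    by_cases h0 : m = 0
    · exact (hadj 2 m (by omega) (by omega) (by unfold QD rrD; omega)).reachable
    by_cases h1 : m = 1
    · exact (hadj 2 m (by omega) (by omega) (by unfold QD rrD; omega)).reachable
    by_cases hn1 : m = n - 1
    · exact (hpath (n - 2) (by omega) (by omega)).trans
        (hadj (n - 2) m (by omega) (by omega) (by unfold QD rrD; omega)).reachable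
    by_cases hnn : m = n
    · exact (hpath (n - 2) (by omega) (by omega)).trans
        (hadj (n - 2) m (by omega) (by omega) (by unfold QD rrD; omega)).reachable
    · exact hpath m (by omega) (by omega)
  intro x y
  exact (hall x).symm.trans (hall y)

instance : DecidableRel E6tGraph.Adj := fun a b =>
  decidable_of_iff _ (SimpleGraph.fromRel_adj _ a b).symm

def wE6 : Fin 7 → ℝ := ![1, 2, 3, 2, 1, 2, 1]

lemma E6_eig : ∀ x, ∑ y, (if E6tGraph.Adj x y then wE6 y else 0) = 2 * wE6 x := by
  intro x
  fin_cases x <;>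
  · simp only [Fin.sum_univ_succ, Finset.sum_empty, Fin.isValue, wE6, Matrix.cons_val_succ, Matrix.cons_val_zero]
    norm_num [E6tGraph, SimpleGraph.fromRel_adj, wE6, Fin.ext_iff]
lemma E6_conn : E6tGraph.Preconnected := by
  have h : ∀ x : Fin 7, E6tGraph.Reachable 0 x := by
    have a01 : E6tGraph.Adj 0 1 := by decide
    have a12 : E6tGraph.Adj 1 2 := by decide
    have a23 : E6tGraph.Adj 2 3 := by decide
    have a34 : E6tGraph.Adj 3 4 := by decide
    have a25 : E6tGraph.Adj 2 5 := by decide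
    have a56 : E6tGraph.Adj 5 6 := by decide
    intro x
    fin_cases x
    · rfl
    · exact a01.reachable
    · exact a01.reachable.trans a12.reachable
    · exact (a01.reachable.trans a12.reachable).trans a23.reachable
    · exact ((a01.reachable.trans a12.reachable).trans a23.reachable).trans a34.reachable
    · exact (a01.reachable.trans a12.reachable).trans a25.reachable
    · exact ((a01.reachable.trans a12.reachable).trans a25.reachable).trans a56.reachable
  exact fun x y => (h x).symm.trans (h y)

instance : DecidableRel E7tGraph.Adj := fun a b =>
  decidable_of_iff _ (SimpleGraph.fromRel_adj _ a b).symm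
instance : DecidableRel E8tGraph.Adj := fun a b =>
  decidable_of_iff _ (SimpleGraph.fromRel_adj _ a b).symm

def wE7 : Fin 8 → ℝ := ![1, 2, 3, 4, 3, 2, 1, 2]
def wE8 : Fin 9 → ℝ := ![2, 4, 6, 5, 4, 3, 2, 1, 3]

lemma E7_eig : ∀ x, ∑ y, (if E7tGraph.Adj x y then wE7 y else 0) = 2 * wE7 x := by
  intro x
  fin_cases x <;>
  · simp only [Fin.sum_univ_succ, Finset.sum_empty, Fin.isValue, wE7, Matrix.cons_val_succ, Matrix.cons_val_zero]
    norm_num [E7tGraph, SimpleGraph.fromRel_adj, wE7, Fin.ext_iff]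

lemma E8_eig : ∀ x, ∑ y, (if E8tGraph.Adj x y then wE8 y else 0) = 2 * wE8 x := by
  intro x
  fin_cases x <;>
  · simp only [Fin.sum_univ_succ, Finset.sum_empty, Fin.isValue, wE8, Matrix.cons_val_succ, Matrix.cons_val_zero]
    norm_num [E8tGraph, SimpleGraph.fromRel_adj, wE8, Fin.ext_iff]

lemma E7_conn : E7tGraph.Preconnected := by
  have h : ∀ x : Fin 8, E7tGraph.Reachable 0 x := by
    have a01 : E7tGraph.Adj 0 1 := by decide
    have a12 : E7tGraph.Adj 1 2 := by decide
    have a23 : E7tGraph.Adj 2 3 := by decide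
    have a34 : E7tGraph.Adj 3 4 := by decide
    have a45 : E7tGraph.Adj 4 5 := by decide
    have a56 : E7tGraph.Adj 5 6 := by decide
    have a37 : E7tGraph.Adj 3 7 := by decide
    intro x
    have r3 : E7tGraph.Reachable 0 3 :=
      (a01.reachable.trans a12.reachable).trans a23.reachable
    fin_cases x
    · rfl
    · exact a01.reachable
    · exact a01.reachable.trans a12.reachable
    · exact r3
    · exact r3.trans a34.reachable
    · exact (r3.trans a34.reachable).trans a45.reachable
    · exact ((r3.trans a34.reachable).trans a45.reachable).trans a56.reachable
    · exact r3.trans a37.reachable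
  exact fun x y => (h x).symm.trans (h y)

lemma E8_conn : E8tGraph.Preconnected := by
  have h : ∀ x : Fin 9, E8tGraph.Reachable 0 x := by
    have a01 : E8tGraph.Adj 0 1 := by decide
    have a12 : E8tGraph.Adj 1 2 := by decide
    have a23 : E8tGraph.Adj 2 3 := by decide
    have a34 : E8tGraph.Adj 3 4 := by decide
    have a45 : E8tGraph.Adj 4 5 := by decide
    have a56 : E8tGraph.Adj 5 6 := by decide
    have a67 : E8tGraph.Adj 6 7 := by decide
    have a28 : E8tGraph.Adj 2 8 := by decide
    intro x
    have r2 : E8tGraph.Reachable 0 2 := a01.reachable.trans a12.reachable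
    fin_cases x
    · rfl
    · exact a01.reachable
    · exact r2
    · exact r2.trans a23.reachable
    · exact (r2.trans a23.reachable).trans a34.reachable
    · exact ((r2.trans a23.reachable).trans a34.reachable).trans a45.reachable
    · exact (((r2.trans a23.reachable).trans a34.reachable).trans a45.reachable).trans a56.reachable
    · exact ((((r2.trans a23.reachable).trans a34.reachable).trans a45.reachable).trans a56.reachable).trans a67.reachable
    · exact r2.trans a28.reachable
  exact fun x y => (h x).symm.trans (h y)

/-- If every connected component of a finite simple graph Γ is a proper
subgraph of one of the extended Dynkin diagrams Ãₙ, D̃ₙ, Ẽ₆, Ẽ₇, Ẽ₈, then the largest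
adjacency eigenvalue of Γ is strictly less than 2. -/
theorem stmt13 {V : Type*} [Fintype V] (G : SimpleGraph V) [DecidableRel G.Adj]
    (hcomp : ∀ c : G.ConnectedComponent,
      (∃ n, 3 ≤ n ∧ ProperlyEmbeds (G.induce c.supp) (cycleGraph n)) ∨
      (∃ n, 4 ≤ n ∧ ProperlyEmbeds (G.induce c.supp) (DtildeGraph n)) ∨
      ProperlyEmbeds (G.induce c.supp) E6tGraph ∨
      ProperlyEmbeds (G.induce c.supp) E7tGraph ∨
      ProperlyEmbeds (G.induce c.supp) E8tGraph) :
    ∀ μ, IsEigen (G.adjMatrix ℝ) μ → μ < 2 := by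
  classical
  intro μ hμeig
  by_contra hlt
  push_neg at hlt
  obtain ⟨v, hv0, hveq⟩ := hμeig
  obtain ⟨i0, hvi0⟩ := Function.ne_iff.mp hv0
  set c := G.connectedComponentMk i0 with hc
  haveI : Fintype ↥c.supp := (Set.toFinite _).fintype
  set u : ↥c.supp → ℝ := fun i => |v i| with hu
  have hi0mem : i0 ∈ c.supp := by
    rw [SimpleGraph.ConnectedComponent.mem_supp_iff]
  have hmem : ∀ {a b : V}, a ∈ c.supp → G.Adj a b → b ∈ c.supp := by
    intro a b ha hab
    rw [SimpleGraph.ConnectedComponent.mem_supp_iff] at ha ⊢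
    rw [← ha]
    exact (SimpleGraph.ConnectedComponent.sound hab.reachable).symm
  have hind : ∀ (i j : ↥c.supp), (G.induce c.supp).Adj i j ↔ G.Adj ↑i ↑j := by
    intro i j
    exact SimpleGraph.comap_adj
  have hμv : ∀ a : V, μ * v a = ∑ b ∈ G.neighborFinset a, v b := by
    intro a
    have h := congrFun hveq a
    rw [SimpleGraph.adjMatrix_mulVec_apply, Pi.smul_apply, smul_eq_mul] at h
    exact h.symm
  have hsub : ∀ i : ↥c.supp, μ * u i ≤ ∑ j, if (G.induce c.supp).Adj i j then u j else 0 := by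
    intro i
    have h1 : μ * u i = |μ * v ↑i| := by
      rw [abs_mul, abs_of_nonneg (by linarith : (0:ℝ) ≤ μ)]
    have h2 : |μ * v ↑i| ≤ ∑ b ∈ G.neighborFinset ↑i, |v b| := by
      rw [hμv ↑i]
      exact Finset.abs_sum_le_sum_abs _ _
    have h3 : ∑ b ∈ G.neighborFinset ↑i, |v b| = ∑ b : V, (if G.Adj ↑i b then |v b| else 0) := by
      rw [SimpleGraph.neighborFinset_eq_filter, Finset.sum_filter]
    have h4 : ∑ b : V, (if G.Adj ↑i b then |v b| else 0)
        = ∑ j : ↥c.supp, (if G.Adj ↑i ↑j then |v ↑j| else 0) := by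
      rw [← Finset.sum_subtype (Set.toFinset c.supp) (fun b => Set.mem_toFinset)
        (fun b => if G.Adj ↑i b then |v b| else 0)]
      refine (Finset.sum_subset (Finset.subset_univ _) ?_).symm
      intro b _ hb
      rw [Set.mem_toFinset] at hb
      rw [if_neg (fun hadj => hb (hmem i.prop hadj))]
    have h5 : ∑ j : ↥c.supp, (if G.Adj ↑i ↑j then |v ↑j| else 0)
        = ∑ j, if (G.induce c.supp).Adj i j then u j else 0 := by
      refine Finset.sum_congr rfl fun j _ => ?_
      by_cases h : G.Adj ↑i ↑j
      · rw [if_pos h, if_pos ((hind i j).mpr h)]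
      · rw [if_neg h, if_neg (fun h2 => h ((hind i j).mp h2))]
    rw [h1]
    calc |μ * v ↑i| ≤ ∑ b ∈ G.neighborFinset ↑i, |v b| := h2
      _ = _ := by rw [h3, h4, h5]
  have hunn : ∀ i, 0 ≤ u i := fun i => abs_nonneg _
  have hupos : 0 < u ⟨i0, hi0mem⟩ := abs_pos.mpr hvi0
  rcases hcomp c with ⟨n, hn3, hemb⟩ | ⟨n, hn4, hemb⟩ | hemb | hemb | hemb
  · haveI : NeZero n := ⟨by omega⟩
    exact key_lemma (G.induce c.supp) (cycleGraph n) (cyc_conn hn3) (fun _ => 1)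
      (fun _ => one_pos) (cyc_eig hn3) hemb μ hlt u hunn ⟨i0, hi0mem⟩ hupos hsub
  · refine key_lemma (G.induce c.supp) (DtildeGraph n) (Dt_conn n hn4)
      (fun y => wvD n y.val) (fun y => by unfold wvD; split_ifs <;> norm_num) ?_ hemb μ hlt
      u hunn ⟨i0, hi0mem⟩ hupos hsub
    intro x
    have h1 : ∑ y : Fin (n+1), (if (DtildeGraph n).Adj x y then wvD n y.val else 0)
        = ∑ y : Fin (n+1), (if QD n x.val y.val then wvD n y.val else 0) := by
      refine Finset.sum_congr rfl fun y _ => ?_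
      by_cases h : QD n x.val y.val
      · rw [if_pos h, if_pos ((Dt_adj n x y).mpr h)]
      · rw [if_neg h, if_neg (fun h2 => h ((Dt_adj n x y).mp h2))]
    rw [h1, Fin.sum_univ_eq_sum_range (fun m => if QD n x.val m then wvD n m else 0)]
    exact Dt_sum n hn4 x.val (by omega)
  · exact key_lemma (G.induce c.supp) E6tGraph E6_conn wE6
      (fun y => by fin_cases y <;> norm_num [wE6]) E6_eig hemb μ hlt u hunn ⟨i0, hi0mem⟩ hupos hsub
  · exact key_lemma (G.induce c.supp) E7tGraph E7_conn wE7
      (fun y => by fin_cases y <;> norm_num [wE7]) E7_eig hemb μ hlt u hunn ⟨i0, hi0mem⟩ hupos hsub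
  · exact key_lemma (G.induce c.supp) E8tGraph E8_conn wE8
      (fun y => by fin_cases y <;> norm_num [wE8]) E8_eig hemb μ hlt u hunn ⟨i0, hi0mem⟩ hupos hsub
end
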